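/- For real 0 < r < 1, the integral over [0, 2π] of log((1+r²)/(1−r²) − cos(y)) dy equals −2π·log(2(1−r)/(1+r)). -/

import Mathlib

open Real

lemma integral_log_one_sub_two_mul_cos (t : ℝ) (ht0 : 0 < t) (ht1 : t < 1) :
    ∫ y in (0:ℝ)..(2 * π), Real.log (1 - 2 * t * Real.cos y + t ^ 2) = 0 := by
  have hpos : ∀ y : ℝ, 0 < 1 - 2 * t * Real.cos y + t ^ 2 := by
    intro y
    have h1 : 2 * t * Real.cos y ≤ 2 * t := by
      have := Real.cos_le_one y
      nlinarith
    nlinarith [sq_nonneg (1 - t)]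
  set f : ℂ → ℂ := fun z => Complex.log (1 - (t : ℂ) * z) with hf
  have hre : ∀ z : ℂ, ‖z‖ ≤ 1 → 0 < (1 - (t : ℂ) * z).re := by
    intro z hz
    have h1 : |z.re| ≤ 1 := le_trans (Complex.abs_re_le_norm z) hz
    have h2 : (1 - (t : ℂ) * z).re = 1 - t * z.re := by simp
    rw [h2]
    have := abs_le.mp h1
    nlinarith
  have hslit : ∀ z : ℂ, ‖z‖ ≤ 1 → (1 - (t : ℂ) * z) ∈ Complex.slitPlane := by
    intro z hz; exact Or.inl (hre z hz)
  have hdiff : ∀ z ∈ Metric.ball (0 : ℂ) 1, DifferentiableAt ℂ f z := by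
    intro z hz
    have hz1 : ‖z‖ ≤ 1 := le_of_lt (by simpa using hz)
    exact (Complex.differentiableAt_log (hslit z hz1)).comp (f := fun z : ℂ => 1 - (t : ℂ) * z) z (by fun_prop)
  have hcont : ContinuousOn f (Metric.closedBall (0 : ℂ) 1) := by
    intro z hz
    have hz1 : ‖z‖ ≤ 1 := by simpa using hz
    have hin : ContinuousAt (fun z : ℂ => 1 - (t:ℂ) * z) z := by fun_prop
    exact (hin.clog (hslit z hz1)).continuousWithinAt
  have hC : (∮ z in C((0:ℂ), 1), (z - 0)⁻¹ • f z) = (2 * π * Complex.I : ℂ) • f 0 :=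
    Complex.circleIntegral_sub_center_inv_smul_of_differentiable_on_off_countable one_pos
      Set.countable_empty hcont (fun z hz => hdiff z hz.1)
  have hf0 : f 0 = 0 := by simp [hf]
  rw [hf0, smul_zero] at hC
  rw [circleIntegral] at hC
  have hint : ∀ θ : ℝ, deriv (circleMap 0 1) θ • (circleMap 0 1 θ - 0)⁻¹ • f (circleMap 0 1 θ)
      = Complex.I * f (circleMap 0 1 θ) := by
    intro θ
    rw [deriv_circleMap]
    have hne : circleMap 0 1 θ ≠ 0 := circleMap_ne_center one_ne_zero
    field_simp [smul_eq_mul]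
    rw [smul_eq_mul, smul_eq_mul, sub_zero, one_div, mul_comm (circleMap 0 1 θ) Complex.I, mul_assoc,
      ← mul_assoc (circleMap 0 1 θ), mul_inv_cancel₀ hne, one_mul]
  simp only [hint] at hC
  rw [intervalIntegral.integral_const_mul] at hC
  have hC2 : (∫ θ in (0:ℝ)..(2*π), f (circleMap 0 1 θ)) = 0 := by
    rcases mul_eq_zero.mp hC with h | h
    · exact absurd h Complex.I_ne_zero
    · exact h
  have hcc : Continuous fun θ : ℝ => f (circleMap 0 1 θ) := by
    rw [continuous_iff_continuousAt]
    intro θ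
    have h1 : ‖circleMap 0 1 θ‖ ≤ 1 := by simp [circleMap]
    have hin : ContinuousAt (fun θ : ℝ => 1 - (t:ℂ) * circleMap 0 1 θ) θ := by
      have := continuous_circleMap (0:ℂ) 1
      fun_prop
    exact hin.clog (hslit _ h1)
  have hInt : IntervalIntegrable (fun θ => f (circleMap 0 1 θ))
      MeasureTheory.volume 0 (2*π) := hcc.intervalIntegrable _ _
  have hre2 : (∫ θ in (0:ℝ)..(2*π), (f (circleMap 0 1 θ)).re) = 0 := by
    have := Complex.reCLM.intervalIntegral_comp_comm hInt
    simp only [Complex.reCLM_apply] at this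
    rw [this, hC2]
    simp
  -- now identify (f (circleMap 0 1 θ)).re with (1/2) log (1 - 2 t cos θ + t²)
  have hkey : ∀ θ : ℝ, (f (circleMap 0 1 θ)).re
      = Real.log (1 - 2 * t * Real.cos θ + t ^ 2) / 2 := by
    intro θ
    have hnsq : Complex.normSq (1 - (t:ℂ) * circleMap 0 1 θ)
        = 1 - 2 * t * Real.cos θ + t ^ 2 := by
      simp [Complex.normSq_apply, circleMap, Complex.exp_ofReal_mul_I_re,
        Complex.exp_ofReal_mul_I_im]
      ring_nf
      nlinarith [Real.sin_sq_add_cos_sq θ]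
    rw [hf]
    simp only [Complex.log_re]
    rw [Complex.norm_def, Real.log_sqrt (Complex.normSq_nonneg _), hnsq]
  simp only [hkey] at hre2
  rw [intervalIntegral.integral_div] at hre2
  have := hre2
  field_simp at this
  simpa using this

theorem integral_log_kernel (r : ℝ) (hr0 : 0 < r) (hr1 : r < 1) :
    ∫ y in (0:ℝ)..(2 * π), Real.log ((1 + r ^ 2) / (1 - r ^ 2) - Real.cos y)
      = -(2 * π) * Real.log (2 * (1 - r) / (1 + r)) := by
  set t : ℝ := (1 - r) / (1 + r) with hts
  have h1r : (0:ℝ) < 1 + r := by linarith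
  have ht0 : 0 < t := div_pos (by linarith) h1r
  have ht1 : t < 1 := by rw [hts, div_lt_one h1r]; linarith
  have hpos : ∀ y : ℝ, 0 < 1 - 2 * t * Real.cos y + t ^ 2 := by
    intro y
    have h1 : 2 * t * Real.cos y ≤ 2 * t := by
      have := Real.cos_le_one y
      nlinarith
    nlinarith [sq_nonneg (1 - t)]
  have heq : ∀ y : ℝ, Real.log ((1 + r ^ 2) / (1 - r ^ 2) - Real.cos y)
      = Real.log (1 - 2 * t * Real.cos y + t ^ 2) - Real.log (2 * t) := by
    intro y
    have hne : (1:ℝ) - r ≠ 0 := by intro h; linarith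
    have harg : (1 + r ^ 2) / (1 - r ^ 2) - Real.cos y
        = (1 - 2 * t * Real.cos y + t ^ 2) / (2 * t) := by
      rw [hts]
      have h2 : (1:ℝ) - r ^ 2 ≠ 0 := by nlinarith
      field_simp
      ring
    rw [harg, Real.log_div (hpos y).ne' (by positivity)]
  have hcont : Continuous fun y : ℝ => Real.log (1 - 2 * t * Real.cos y + t ^ 2) := by
    apply Continuous.log (by fun_prop)
    intro y; exact (hpos y).ne'
  simp only [heq]
  rw [intervalIntegral.integral_sub (hcont.intervalIntegrable _ _)
    (intervalIntegrable_const), integral_log_one_sub_two_mul_cos t ht0 ht1,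
    intervalIntegral.integral_const]
  have h2t : 2 * t = 2 * (1 - r) / (1 + r) := by rw [hts]; ring
  rw [h2t]
  simp [smul_eq_mul]
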